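/- For β, ζ > 0 define η = 4β² + ζ. Then for any two one-dimensional Gaussian measures ψ_i, ψ_j with means x_i, x_j and common variance β², the squared MMD with respect to the Gaussian kernel of bandwidth ζ can be written as ρ²(ψ_i, ψ_j) = C·(1 - g(x_i, x_j)), where g(x,y) = exp(-(x-y)²/η) is the Gaussian kernel of bandwidth η and C = 2·(ζ/η)^{1/2} is a constant independent of x_i, x_j. Hence the MMD-distance matrix between the KDE component measures is an affine transformation of the Gaussian kernel matrix of bandwidth η evaluated on the data points. -/

import Mathlib

open MeasureTheory Real

/-- Density of a 1-D Gaussian with mean `a` and variance `β²`. -/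
noncomputable def gaussDensity (β a x : ℝ) : ℝ :=
  (2 * Real.pi * β ^ 2) ^ (-(1 : ℝ) / 2) * Real.exp (-(x - a) ^ 2 / (2 * β ^ 2))

/-- Squared MMD between the Gaussians with means `a`, `b` and variance `β²`
with respect to the Gaussian kernel of bandwidth `ζ`. -/
noncomputable def gaussMMD2 (β ζ a b : ℝ) : ℝ :=
  (∫ x : ℝ, ∫ y : ℝ, Real.exp (-(x - y) ^ 2 / ζ) * gaussDensity β a x * gaussDensity β a y)
  + (∫ x : ℝ, ∫ y : ℝ, Real.exp (-(x - y) ^ 2 / ζ) * gaussDensity β b x * gaussDensity β b y)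
  - 2 * ∫ x : ℝ, ∫ y : ℝ, Real.exp (-(x - y) ^ 2 / ζ) * gaussDensity β a x * gaussDensity β b y

/-- With `η = 4β² + ζ`, the squared MMD between the KDE component measures equals
`C·(1 − g(x_i, x_j))` where `g` is the Gaussian kernel of bandwidth `η` and
`C = 2·(ζ/η)^{1/2}` is a constant independent of the data points. -/
lemma conv_lemma (β c b : ℝ) (hβ : 0 < β) (hc : 0 < c) (x : ℝ) :
    ∫ y : ℝ, Real.exp (-(x - y) ^ 2 / c) * gaussDensity β b y
      = (c / (c + 2 * β ^ 2)) ^ ((1 : ℝ) / 2)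
        * Real.exp (-(x - b) ^ 2 / (c + 2 * β ^ 2)) := by
  have hβ2 : (0:ℝ) < β ^ 2 := by positivity
  have hden : (0:ℝ) < c + 2 * β ^ 2 := by positivity
  set A : ℝ := (c + 2 * β ^ 2) / (2 * β ^ 2 * c) with hA
  have hApos : 0 < A := by positivity
  set N : ℝ := (2 * Real.pi * β ^ 2) ^ (-(1 : ℝ) / 2) with hN
  set m : ℝ := (2 * β ^ 2 * x + c * b) / (c + 2 * β ^ 2) with hm
  have key : ∀ y : ℝ, Real.exp (-(x - y) ^ 2 / c) * gaussDensity β b y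
      = (N * Real.exp (-(x - b) ^ 2 / (c + 2 * β ^ 2)))
        * Real.exp (-A * (y - m) ^ 2) := by
    intro y
    unfold gaussDensity
    rw [← hN, mul_comm (Real.exp (-(x - y) ^ 2 / c)) (N * Real.exp (-(y - b) ^ 2 / (2 * β ^ 2)))]
    rw [mul_assoc, mul_assoc, ← Real.exp_add, ← Real.exp_add]
    congr 2
    rw [hA, hm]
    have hπ := Real.pi_pos
    field_simp
    ring
  simp_rw [key]
  rw [integral_const_mul]
  have htrans : ∫ y : ℝ, Real.exp (-A * (y - m) ^ 2)
      = ∫ y : ℝ, Real.exp (-A * y ^ 2) :=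
    integral_sub_right_eq_self (fun y => Real.exp (-A * y ^ 2)) m
  rw [htrans, integral_gaussian]
  -- now: N * exp(..) * √(π/A) = (c/(c+2β²))^(1/2) * exp(..)
  rw [Real.sqrt_eq_rpow]
  have hπ := Real.pi_pos
  have h1 : N * Real.exp (-(x - b) ^ 2 / (c + 2 * β ^ 2)) * (π / A) ^ ((1:ℝ)/2)
      = (N * (π / A) ^ ((1:ℝ)/2)) * Real.exp (-(x - b) ^ 2 / (c + 2 * β ^ 2)) := by ring
  rw [h1]
  congr 1
  rw [hN, show -(1:ℝ)/2 = -(1/2) by norm_num, Real.rpow_neg (by positivity),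
    inv_mul_eq_div, ← Real.div_rpow (by positivity) (by positivity)]
  congr 1
  rw [hA]
  field_simp

lemma double_int (β ζ a b : ℝ) (hβ : 0 < β) (hζ : 0 < ζ) :
    (∫ x : ℝ, ∫ y : ℝ, Real.exp (-(x - y) ^ 2 / ζ) * gaussDensity β a x * gaussDensity β b y)
      = (ζ / (4 * β ^ 2 + ζ)) ^ ((1 : ℝ) / 2)
        * Real.exp (-(a - b) ^ 2 / (4 * β ^ 2 + ζ)) := by
  have hβ2 : (0:ℝ) < β ^ 2 := by positivity
  have hc' : (0:ℝ) < ζ + 2 * β ^ 2 := by positivity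
  have step1 : ∀ x : ℝ,
      (∫ y : ℝ, Real.exp (-(x - y) ^ 2 / ζ) * gaussDensity β a x * gaussDensity β b y)
        = gaussDensity β a x * ((ζ / (ζ + 2 * β ^ 2)) ^ ((1 : ℝ) / 2)
            * Real.exp (-(x - b) ^ 2 / (ζ + 2 * β ^ 2))) := by
    intro x
    have : ∀ y : ℝ, Real.exp (-(x - y) ^ 2 / ζ) * gaussDensity β a x * gaussDensity β b y
        = gaussDensity β a x * (Real.exp (-(x - y) ^ 2 / ζ) * gaussDensity β b y) := by
      intro y; ring
    simp_rw [this]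
    rw [integral_const_mul, conv_lemma β ζ b hβ hζ x]
  simp_rw [step1]
  have step2 : ∀ x : ℝ,
      gaussDensity β a x * ((ζ / (ζ + 2 * β ^ 2)) ^ ((1 : ℝ) / 2)
          * Real.exp (-(x - b) ^ 2 / (ζ + 2 * β ^ 2)))
        = (ζ / (ζ + 2 * β ^ 2)) ^ ((1 : ℝ) / 2)
          * (Real.exp (-(b - x) ^ 2 / (ζ + 2 * β ^ 2)) * gaussDensity β a x) := by
    intro x
    have hsq : (x - b) ^ 2 = (b - x) ^ 2 := by ring
    rw [hsq]; ring
  simp_rw [step2]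
  rw [integral_const_mul, conv_lemma β (ζ + 2 * β ^ 2) a hβ hc' b]
  rw [← mul_assoc, ← Real.mul_rpow (by positivity) (by positivity)]
  have h1 : ζ / (ζ + 2 * β ^ 2) * ((ζ + 2 * β ^ 2) / (ζ + 2 * β ^ 2 + 2 * β ^ 2))
      = ζ / (4 * β ^ 2 + ζ) := by
    rw [div_mul_div_comm, mul_comm ζ (ζ + 2 * β ^ 2), mul_div_mul_left _ _ (ne_of_gt hc')]
    ring_nf
  have h2 : ζ + 2 * β ^ 2 + 2 * β ^ 2 = 4 * β ^ 2 + ζ := by ring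
  have h3 : (b - a) ^ 2 = (a - b) ^ 2 := by ring
  rw [h1, h2, h3]

theorem stmt_2 (β ζ : ℝ) (hβ : 0 < β) (hζ : 0 < ζ) :
    ∃ C : ℝ, C = 2 * (ζ / (4 * β ^ 2 + ζ)) ^ ((1 : ℝ) / 2) ∧
      ∀ xi xj : ℝ, gaussMMD2 β ζ xi xj
        = C * (1 - Real.exp (-(xi - xj) ^ 2 / (4 * β ^ 2 + ζ))) := by
  refine ⟨_, rfl, fun xi xj => ?_⟩
  unfold gaussMMD2
  rw [double_int β ζ xi xi hβ hζ, double_int β ζ xj xj hβ hζ, double_int β ζ xi xj hβ hζ]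
  simp only [sub_self, ne_eq]
  norm_num
  ring
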